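/- The function Δ(β) defined implicitly by the derivative of the asymptotic rate bound R(β) = log₂(1 + ρ / ((Φ/(1−βζ)) · (ρ(1 − β(1−ξ²)) + 1))) with respect to β has a sign independent of β: sgn(dR/dβ) = sgn(ρ(1 − ξ²) − ζ(1 + ρ)). Consequently R(β) is monotone on [0,1] and is maximized at β = 0 or β = 1. -/

import Mathlib

open Real

lemma sign_mul_pos_left (c K : ℝ) (hc : 0 < c) : Real.sign (c * K) = Real.sign K := by
  rcases lt_trichotomy K 0 with h | h | h
  · rw [Real.sign_of_neg h, Real.sign_of_neg (mul_neg_of_pos_of_neg hc h)]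
  · simp [h]
  · rw [Real.sign_of_pos h, Real.sign_of_pos (mul_pos hc h)]

theorem stmt_6 (ρ ζ Φ ξ2 : ℝ) (hρ : 0 < ρ) (hξ0 : 0 ≤ ξ2) (hξ1 : ξ2 < 1)
    (hζ0 : 0 < ζ) (hζ1 : ζ < 1) (hΦ : 0 < Φ)
    (R : ℝ → ℝ)
    (hR : ∀ β : ℝ, R β =
      Real.logb 2 (1 + ρ / ((Φ / (1 - β * ζ)) * (ρ * (1 - β * (1 - ξ2)) + 1)))) :
    (∀ β ∈ Set.Icc (0 : ℝ) 1,
        Real.sign (deriv R β) = Real.sign (ρ * (1 - ξ2) - ζ * (1 + ρ)))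
      ∧ (MonotoneOn R (Set.Icc 0 1) ∨ AntitoneOn R (Set.Icc 0 1))
      ∧ ∀ β ∈ Set.Icc (0 : ℝ) 1, R β ≤ max (R 0) (R 1) := by
  have hlog2 : (0:ℝ) < Real.log 2 := Real.log_pos one_lt_two
  set K := ρ * (1 - ξ2) - ζ * (1 + ρ) with hKdef
  have hR' : R = fun β : ℝ =>
      Real.log (1 + ρ * (1 - β * ζ) / (Φ * (ρ * (1 - β * (1 - ξ2)) + 1))) / Real.log 2 := by
    funext β
    rw [hR β, Real.logb]
    congr 2
    rw [div_mul_eq_mul_div, div_div_eq_mul_div]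
  -- key derivative fact
  have key : ∀ β ∈ Set.Icc (0:ℝ) 1, ∃ c : ℝ, 0 < c ∧ HasDerivAt R (c * K) β := by
    intro β hβ
    obtain ⟨hβ0, hβ1⟩ := hβ
    have hN : 0 < 1 - β * ζ := by nlinarith
    have hD : 0 < ρ * (1 - β * (1 - ξ2)) + 1 := by
      have h3 : β * (1 - ξ2) ≤ 1 - ξ2 := mul_le_of_le_one_left (by linarith) hβ1
      nlinarith [mul_nonneg hρ.le (show (0:ℝ) ≤ 1 - β * (1 - ξ2) by linarith)]
    have hD2 : 0 < Φ * (ρ * (1 - β * (1 - ξ2)) + 1) := mul_pos hΦ hD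
    have hg : 0 < 1 + ρ * (1 - β * ζ) / (Φ * (ρ * (1 - β * (1 - ξ2)) + 1)) :=
      add_pos one_pos (div_pos (mul_pos hρ hN) hD2)
    have hid : HasDerivAt (fun b : ℝ => b) 1 β := hasDerivAt_id β
    have h1 : HasDerivAt (fun b : ℝ => ρ * (1 - b * ζ)) (ρ * (-ζ)) β := by
      have := ((hid.mul_const ζ).const_sub 1).const_mul ρ
      exact this.congr_deriv (by ring)
    have h2 : HasDerivAt (fun b : ℝ => Φ * (ρ * (1 - b * (1 - ξ2)) + 1))
        (-(Φ * ρ * (1 - ξ2))) β := by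
      have := ((((hid.mul_const (1 - ξ2)).const_sub 1).const_mul ρ).add_const 1).const_mul Φ
      exact this.congr_deriv (by ring)
    have hdiv := h1.div h2 (ne_of_gt hD2)
    have hlogd := ((hdiv.const_add 1).log (ne_of_gt hg)).div_const (Real.log 2)
    refine ⟨ρ * Φ / ((Φ * (ρ * (1 - β * (1 - ξ2)) + 1))^2 *
      (1 + ρ * (1 - β * ζ) / (Φ * (ρ * (1 - β * (1 - ξ2)) + 1))) * Real.log 2),
      by positivity, ?_⟩
    rw [hR']
    refine hlogd.congr_deriv ?_
    simp only [Pi.div_apply]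
    rw [hKdef]
    field_simp
    ring
  have hderiv : ∀ β ∈ Set.Icc (0:ℝ) 1, ∃ c : ℝ, 0 < c ∧ deriv R β = c * K := by
    intro β hβ
    obtain ⟨c, hc, h⟩ := key β hβ
    exact ⟨c, hc, h.deriv⟩
  have hcont : ContinuousOn R (Set.Icc 0 1) := fun x hx => by
    obtain ⟨c, _, h⟩ := key x hx
    exact h.differentiableAt.continuousAt.continuousWithinAt
  have hdiff : DifferentiableOn ℝ R (interior (Set.Icc (0:ℝ) 1)) := fun x hx => by
    rw [interior_Icc] at hx
    obtain ⟨c, _, h⟩ := key x (Set.mem_Icc_of_Ioo hx)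
    exact h.differentiableAt.differentiableWithinAt
  have part1 : ∀ β ∈ Set.Icc (0:ℝ) 1, Real.sign (deriv R β) = Real.sign K := by
    intro β hβ
    obtain ⟨c, hc, h⟩ := hderiv β hβ
    rw [h, sign_mul_pos_left c K hc]
  rcases le_or_gt 0 K with hK | hK
  · have hmono : MonotoneOn R (Set.Icc 0 1) := by
      apply monotoneOn_of_deriv_nonneg (convex_Icc 0 1) hcont hdiff
      intro x hx
      rw [interior_Icc] at hx
      obtain ⟨c, hc, h⟩ := hderiv x (Set.mem_Icc_of_Ioo hx)
      rw [h]
      exact mul_nonneg hc.le hK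
    exact ⟨part1, Or.inl hmono, fun β hβ =>
      le_max_of_le_right (hmono hβ (Set.right_mem_Icc.2 zero_le_one) hβ.2)⟩
  · have hanti : AntitoneOn R (Set.Icc 0 1) := by
      apply antitoneOn_of_deriv_nonpos (convex_Icc 0 1) hcont hdiff
      intro x hx
      rw [interior_Icc] at hx
      obtain ⟨c, hc, h⟩ := hderiv x (Set.mem_Icc_of_Ioo hx)
      rw [h]
      exact mul_nonpos_of_nonneg_of_nonpos hc.le hK.le
    exact ⟨part1, Or.inr hanti, fun β hβ =>
      le_max_of_le_left (hanti (Set.left_mem_Icc.2 zero_le_one) hβ hβ.1)⟩
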